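/- Let r ≥ 1 and let (h_{ij})_{1≤i,j≤r} be a matrix of nonnegative integers. Set n = Σ_{i,j} h_{ij}, let m_j = Σ_{i=1}^r h_{ij} be the j-th column sum and m'_i = Σ_{j=1}^r h_{ij} the i-th row sum. Define C = (r−1)·n − (Σ_{j=1}^r (j−1)·m_j) − (Σ_{i=1}^{r−2} (r−1−i)·m'_i + (r−1)·m'_r). Then C + Σ_{1≤i,j≤r} [j−i−1]·h_{ij} = r·Σ_{i=1}^{r−1} Σ_{k=1}^{i} h_{ik}, where [s] denotes the unique integer in {0,…,r−1} congruent to s modulo r. -/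

import Mathlib

open Finset

/-- The key identity (5.11.3) in the proof of Lemma 5.9 of the paper.  Here
`((j - i - 1) % r)` is the residue `[j−i−1] ∈ {0,…,r−1}` of `j−i−1` modulo `r`. -/
theorem stmt_1 (r : ℕ) (hr : 1 ≤ r) (h : ℕ → ℕ → ℕ)
    (n : ℕ) (hn : n = ∑ i ∈ Icc 1 r, ∑ j ∈ Icc 1 r, h i j)
    (m m' : ℕ → ℕ)
    (hm : ∀ j, m j = ∑ i ∈ Icc 1 r, h i j)
    (hm' : ∀ i, m' i = ∑ j ∈ Icc 1 r, h i j)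
    (C : ℤ)
    (hC : C = ((r : ℤ) - 1) * (n : ℤ) - (∑ j ∈ Icc 1 r, ((j : ℤ) - 1) * (m j : ℤ))
        - ((∑ i ∈ Icc 1 (r - 2), ((r : ℤ) - 1 - (i : ℤ)) * (m' i : ℤ))
            + ((r : ℤ) - 1) * (m' r : ℤ))) :
    C + ∑ i ∈ Icc 1 r, ∑ j ∈ Icc 1 r, (((j : ℤ) - (i : ℤ) - 1) % (r : ℤ)) * (h i j : ℤ)
      = (r : ℤ) * ∑ i ∈ Icc 1 (r - 1), ∑ k ∈ Icc 1 i, (h i k : ℤ) := by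
  subst hn hC
  simp only [hm, hm']
  push_cast
  -- evaluate the residue
  have hmod : ∀ i ∈ Icc 1 r, ∀ j ∈ Icc 1 r,
      ((j : ℤ) - i - 1) % r = if j ≤ i then (j : ℤ) - i - 1 + r else (j : ℤ) - i - 1 := by
    intro i hi j hj
    simp only [mem_Icc] at hi hj
    have hi1 : (1 : ℤ) ≤ i := by exact_mod_cast hi.1
    have hi2 : (i : ℤ) ≤ r := by exact_mod_cast hi.2
    have hj1 : (1 : ℤ) ≤ j := by exact_mod_cast hj.1
    have hj2 : (j : ℤ) ≤ r := by exact_mod_cast hj.2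
    split_ifs with hji
    · have hji' : (j : ℤ) ≤ i := by exact_mod_cast hji
      have : ((j : ℤ) - i - 1) % r = ((j : ℤ) - i - 1 + r * 1) % r := by
        rw [Int.add_mul_emod_self_left]
      rw [this, mul_one, Int.emod_eq_of_lt (by omega) (by omega)]
    · have hji' : (i : ℤ) < j := by exact_mod_cast Nat.lt_of_not_le hji
      rw [Int.emod_eq_of_lt (by omega) (by omega)]
  have hK : ∑ i ∈ Icc 1 r, ∑ j ∈ Icc 1 r, (((j : ℤ) - i - 1) % r) * (h i j : ℤ)
      = ∑ i ∈ Icc 1 r, ∑ j ∈ Icc 1 r,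
          (if j ≤ i then (j : ℤ) - i - 1 + r else (j : ℤ) - i - 1) * (h i j : ℤ) :=
    Finset.sum_congr rfl fun i hi => Finset.sum_congr rfl fun j hj => by
      rw [hmod i hi j hj]
  rw [hK]
  -- rewrite the m' part as a sum over Icc 1 r
  have hA : (∑ i ∈ Icc 1 (r - 2), ((r : ℤ) - 1 - i) * ∑ j ∈ Icc 1 r, (h i j : ℤ))
      + ((r : ℤ) - 1) * ∑ j ∈ Icc 1 r, (h r j : ℤ)
      = ∑ i ∈ Icc 1 r, (if i = r then (r : ℤ) - 1 else (r : ℤ) - 1 - i)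
          * ∑ j ∈ Icc 1 r, (h i j : ℤ) := by
    have h1 : ∑ i ∈ Icc 1 (r - 2), ((r : ℤ) - 1 - i) * ∑ j ∈ Icc 1 r, (h i j : ℤ)
        = ∑ i ∈ Icc 1 (r - 1), (if i = r then (r : ℤ) - 1 else (r : ℤ) - 1 - i)
            * ∑ j ∈ Icc 1 r, (h i j : ℤ) := by
      rw [Finset.sum_subset (Icc_subset_Icc_right (by omega : r - 2 ≤ r - 1))]
      · exact Finset.sum_congr rfl fun i hi => by
          simp only [mem_Icc] at hi
          rw [if_neg (by omega)]
      · intro i hi hni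
        simp only [mem_Icc] at hi
        simp only [mem_Icc, not_and, not_le] at hni
        have hir : i = r - 1 := by omega
        have : (r : ℤ) - 1 - i = 0 := by
          subst hir
          have : ((r - 1 : ℕ) : ℤ) = (r : ℤ) - 1 := by push_cast [hr]; ring
          rw [this]; ring
        rw [this, zero_mul]
    rw [h1]
    have h2 : r = (r - 1) + 1 := by omega
    conv_rhs => rw [h2]
    rw [Finset.sum_Icc_succ_top (by omega : 1 ≤ (r - 1) + 1)]
    rw [← h2, if_pos rfl]
  rw [hA]
  -- rewrite the RHS as a double sum over Icc 1 r
  have hB : (r : ℤ) * ∑ i ∈ Icc 1 (r - 1), ∑ k ∈ Icc 1 i, (h i k : ℤ)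
      = ∑ i ∈ Icc 1 r, ∑ j ∈ Icc 1 r,
          (if i ≤ r - 1 ∧ j ≤ i then (r : ℤ) else 0) * (h i j : ℤ) := by
    rw [Finset.mul_sum]
    rw [← Finset.sum_subset (Icc_subset_Icc_right (by omega : r - 1 ≤ r))]
    · refine Finset.sum_congr rfl fun i hi => ?_
      simp only [mem_Icc] at hi
      rw [Finset.mul_sum]
      rw [← Finset.sum_subset (Icc_subset_Icc_right (by omega : i ≤ r))]
      · exact Finset.sum_congr rfl fun j hj => by
          simp only [mem_Icc] at hj
          rw [if_pos ⟨hi.2, hj.2⟩]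
      · intro j hj hnj
        simp only [mem_Icc] at hj
        simp only [mem_Icc, not_and, not_le] at hnj
        rw [if_neg (by omega), zero_mul]
    · intro i hi hni
      simp only [mem_Icc] at hi
      simp only [mem_Icc, not_and, not_le] at hni
      exact Finset.sum_eq_zero fun j hj => by
        rw [if_neg (by omega), zero_mul]
  rw [hB]
  -- turn everything into one double sum
  rw [Finset.mul_sum]
  simp_rw [Finset.mul_sum]
  rw [Finset.sum_comm (s := Icc 1 r) (t := Icc 1 r)
    (f := fun j i => ((j : ℤ) - 1) * (h i j : ℤ))]
  rw [← Finset.sum_sub_distrib, ← Finset.sum_sub_distrib, ← Finset.sum_add_distrib]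
  refine Finset.sum_congr rfl fun i hi => ?_
  rw [← Finset.sum_sub_distrib, ← Finset.sum_sub_distrib, ← Finset.sum_add_distrib]
  refine Finset.sum_congr rfl fun j hj => ?_
  simp only [mem_Icc] at hi hj
  have e : ((r : ℤ) - 1) - ((j : ℤ) - 1)
      - (if i = r then (r : ℤ) - 1 else (r : ℤ) - 1 - i)
      + (if j ≤ i then (j : ℤ) - i - 1 + r else (j : ℤ) - i - 1)
      = (if i ≤ r - 1 ∧ j ≤ i then (r : ℤ) else 0) := by
    split_ifs <;> omega
  linear_combination (h i j : ℤ) * e
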